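/- For a ∈ M_3(ℂ)^{⊗n} ⊗ ℂ³ written as a = Σ_i a_i ⊗ e_{ii}, and the operator F on (ℂ³)^{⊗n} ⊗ E (E = off-diagonal 3×3 matrices with Hilbert–Schmidt inner product) acting by F(x ⊗ m) = x ⊗ m^T, the operator norm ‖a − F a F‖ equals osc(a) = max_{i≠j} ‖a_i − a_j‖; hence ‖[F, a]‖ = osc(a). -/

import Mathlib

open Matrix

/-- The index set of the six off-diagonal matrix units, i.e. the oriented edges. -/
abbrev OffDiag3 := {p : Fin 3 × Fin 3 // p.1 ≠ p.2}

namespace Stmt16Aux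

lemma norm_le_of_sq_le_sq {a b : ℝ} (hb : 0 ≤ b) (h : a^2 ≤ b^2) (ha : 0 ≤ a) : a ≤ b := by
  nlinarith

lemma eq_of_sq_eq_sq' {a b : ℝ} (ha : 0 ≤ a) (hb : 0 ≤ b) (h : a^2 = b^2) : a = b := by
  nlinarith

lemma clm_apply' {n : Type*} [Fintype n] [DecidableEq n] (M : Matrix n n ℂ)
    (v : EuclideanSpace ℂ n) (i : n) :
    toEuclideanCLM (𝕜 := ℂ) M v i = ∑ j, M i j * v j := rfl

/-- The operator norm of a block-diagonal matrix acting on a Euclidean space is the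
supremum of the operator norms of the blocks. -/
lemma block_norm {ι : Type*} [Fintype ι] [DecidableEq ι] [Nonempty ι] {m : ℕ}
    (B : ι → Matrix (Fin m) (Fin m) ℂ)
    (M : Matrix (Fin m × ι) (Fin m × ι) ℂ)
    (h : ∀ p q e e', M (p, e) (q, e') = if e = e' then B e p q else 0) :
    ‖toEuclideanCLM (𝕜 := ℂ) M‖ = ⨆ e, ‖toEuclideanCLM (𝕜 := ℂ) (B e)‖ := by
  classical
  set s := ⨆ e, ‖toEuclideanCLM (𝕜 := ℂ) (B e)‖ with hs
  have hbdd : BddAbove (Set.range fun e => ‖toEuclideanCLM (𝕜 := ℂ) (B e)‖) :=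
    Set.Finite.bddAbove (Set.finite_range _)
  have hle : ∀ e, ‖toEuclideanCLM (𝕜 := ℂ) (B e)‖ ≤ s := fun e => le_ciSup hbdd e
  have hs0 : 0 ≤ s := le_trans (norm_nonneg _) (hle (Classical.arbitrary ι))
  -- restriction of a vector to a block
  set ve : EuclideanSpace ℂ (Fin m × ι) → ι → EuclideanSpace ℂ (Fin m) :=
    fun v e => (WithLp.equiv 2 _).symm fun q => v (q, e) with hve
  have hact : ∀ (v : EuclideanSpace ℂ (Fin m × ι)) p e,
      toEuclideanCLM (𝕜 := ℂ) M v (p, e)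
        = toEuclideanCLM (𝕜 := ℂ) (B e) (ve v e) p := by
    intro v p e
    rw [clm_apply', clm_apply', Fintype.sum_prod_type_right, Finset.sum_comm]
    simp only [h, ite_mul, zero_mul, Finset.sum_ite_eq, Finset.mem_univ, if_true, hve]
    rfl
  have hnormsq : ∀ v : EuclideanSpace ℂ (Fin m × ι),
      ‖toEuclideanCLM (𝕜 := ℂ) M v‖^2 = ∑ e, ‖toEuclideanCLM (𝕜 := ℂ) (B e) (ve v e)‖^2 := by
    intro v
    rw [PiLp.norm_sq_eq_of_L2, Fintype.sum_prod_type_right]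
    refine Finset.sum_congr rfl fun e _ => ?_
    rw [PiLp.norm_sq_eq_of_L2]
    exact Finset.sum_congr rfl fun p _ => by rw [hact]
  have hvsq : ∀ v : EuclideanSpace ℂ (Fin m × ι), ‖v‖^2 = ∑ e, ‖ve v e‖^2 := by
    intro v
    rw [PiLp.norm_sq_eq_of_L2, Fintype.sum_prod_type_right]
    refine Finset.sum_congr rfl fun e _ => ?_
    rw [PiLp.norm_sq_eq_of_L2]
    rfl
  refine le_antisymm (ContinuousLinearMap.opNorm_le_bound _ hs0 fun v => ?_)
    (ciSup_le fun e => ?_)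
  · refine norm_le_of_sq_le_sq (by positivity) ?_ (norm_nonneg _)
    rw [hnormsq, mul_pow, hvsq, Finset.mul_sum]
    refine Finset.sum_le_sum fun e _ => ?_
    rw [← mul_pow]
    refine pow_le_pow_left₀ (norm_nonneg _) ?_ 2
    exact le_trans ((toEuclideanCLM (𝕜 := ℂ) (B e)).le_opNorm _)
      (mul_le_mul_of_nonneg_right (hle e) (norm_nonneg _))
  · refine ContinuousLinearMap.opNorm_le_bound _ (norm_nonneg _) fun w => ?_
    set v : EuclideanSpace ℂ (Fin m × ι) :=
      (WithLp.equiv 2 _).symm fun z : Fin m × ι => if z.2 = e then w z.1 else 0 with hv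
    have hvee : ∀ e', ve v e' = if e' = e then w else 0 := by
      intro e'
      ext q
      by_cases hc : e' = e <;> simp [hve, hv, hc] <;> rfl
    have h1 : ‖toEuclideanCLM (𝕜 := ℂ) (B e) w‖ = ‖toEuclideanCLM (𝕜 := ℂ) M v‖ := by
      refine eq_of_sq_eq_sq' (norm_nonneg _) (norm_nonneg _) ?_
      rw [hnormsq]
      have hterm : ∀ e', ‖toEuclideanCLM (𝕜 := ℂ) (B e') (ve v e')‖^2
          = if e' = e then ‖toEuclideanCLM (𝕜 := ℂ) (B e) w‖^2 else 0 := by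
        intro e'
        rw [hvee]
        by_cases hc : e' = e
        · subst hc; simp
        · simp [hc]
      rw [Finset.sum_congr rfl fun e' _ => hterm e', Finset.sum_ite_eq']
      simp
    have h2 : ‖v‖ = ‖w‖ := by
      refine eq_of_sq_eq_sq' (norm_nonneg _) (norm_nonneg _) ?_
      have hterm : ∀ e', ‖ve v e'‖^2 = if e' = e then ‖w‖^2 else 0 := by
        intro e'
        rw [hvee]
        by_cases hc : e' = e
        · subst hc; simp
        · simp [hc]
      rw [hvsq, Finset.sum_congr rfl fun e' _ => hterm e', Finset.sum_ite_eq']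
      simp
    rw [h1, ← h2]
    exact (toEuclideanCLM (𝕜 := ℂ) M).le_opNorm v

/-- edge reversal -/
def odRev : OffDiag3 → OffDiag3 := fun e => ⟨(e.val.2, e.val.1), e.prop.symm⟩

lemma odRev_odRev (e : OffDiag3) : odRev (odRev e) = e := Subtype.ext rfl

lemma odRev_inj {e e' : OffDiag3} (h : odRev e = odRev e') : e = e' := by
  have := congrArg odRev h
  rwa [odRev_odRev, odRev_odRev] at this

end Stmt16Aux

open Stmt16Aux

/-- For `a = Σ_i a_i ⊗ e_{ii}` acting on `H_n = (ℂ³)^{⊗n} ⊗ E` (with `E` the span of the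
off-diagonal matrix units) and `F` the transpose operator `x ⊗ m ↦ x ⊗ mᵀ`, one has
`‖a − F a F‖ = osc(a) = max_{i≠j} ‖a_i − a_j‖`, and hence `‖[F,a]‖ = osc(a)`.
Here everything is modelled by explicit matrices indexed by `Fin m × OffDiag3`
(`m = 3^n`). -/
theorem stmt16 (m : ℕ) (aM : Fin 3 → Matrix (Fin m) (Fin m) ℂ)
    (A F : Matrix (Fin m × OffDiag3) (Fin m × OffDiag3) ℂ)
    (hA : ∀ p q : Fin m, ∀ e e' : OffDiag3,
      A (p, e) (q, e') = if e = e' then aM e.val.1 p q else 0)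
    (hF : ∀ p q : Fin m, ∀ e e' : OffDiag3,
      F (p, e) (q, e') = if p = q ∧ e.val = (e'.val.2, e'.val.1) then 1 else 0)
    (osc : ℝ)
    (hosc : osc = ⨆ e : OffDiag3, ‖toEuclideanCLM (𝕜 := ℂ) (aM e.val.1 - aM e.val.2)‖) :
    ‖toEuclideanCLM (𝕜 := ℂ) (A - F * A * F)‖ = osc ∧
    ‖toEuclideanCLM (𝕜 := ℂ) (F * A - A * F)‖ = osc := by
  classical
  haveI : Nonempty OffDiag3 := ⟨⟨(0, 1), by decide⟩⟩
  have hF' : ∀ p q e e', F (p, e) (q, e') = if (q, e') = (p, odRev e) then 1 else 0 := by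
    intro p q e e'
    rw [hF]
    congr 1
    simp only [Prod.ext_iff, Subtype.ext_iff, odRev]
    apply propext
    constructor
    · rintro ⟨rfl, h1, h2⟩
      exact ⟨rfl, h2.symm, h1.symm⟩
    · rintro ⟨rfl, h1, h2⟩
      exact ⟨rfl, h2.symm, h1.symm⟩
  have hFsum : ∀ (g : Fin m × OffDiag3 → ℂ) p e, (∑ z, F (p, e) z * g z) = g (p, odRev e) := by
    intro g p e
    rw [Finset.sum_eq_single (p, odRev e)]
    · rw [hF' p p e (odRev e), if_pos rfl, one_mul]
    · rintro ⟨q, f⟩ - hb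
      rw [hF' p q e f, if_neg (by exact_mod_cast hb), zero_mul]
    · exact fun hmem => absurd (Finset.mem_univ _) hmem
  have hFmul : ∀ (X : Matrix (Fin m × OffDiag3) (Fin m × OffDiag3) ℂ) p e z,
      (F * X) (p, e) z = X (p, odRev e) z := by
    intro X p e z
    rw [Matrix.mul_apply]
    exact hFsum (fun w => X w z) p e
  have hmulF : ∀ (X : Matrix (Fin m × OffDiag3) (Fin m × OffDiag3) ℂ) z q e',
      (X * F) z (q, e') = X z (q, odRev e') := by
    intro X z q e'
    rw [Matrix.mul_apply]
    rw [Finset.sum_eq_single (q, odRev e')]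
    · rw [hF' q q (odRev e') e']
      rw [if_pos (by rw [odRev_odRev]), mul_one]
    · rintro ⟨r, f⟩ - hb
      rw [hF' r q f e', if_neg, mul_zero]
      intro hc
      apply hb
      obtain ⟨h1, h2⟩ := Prod.ext_iff.mp hc
      dsimp only at h1 h2
      exact Prod.ext_iff.mpr ⟨h1.symm, by dsimp only; rw [h2, odRev_odRev]⟩
    · exact fun hmem => absurd (Finset.mem_univ _) hmem
  have hFF : F * F = 1 := by
    ext ⟨p, e⟩ ⟨q, e'⟩
    rw [hFmul, hF' _ _ _ _, Matrix.one_apply]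
    congr 1
    rw [odRev_odRev]
    exact propext eq_comm
  -- entries of `A - F * A * F`
  have hFAF : ∀ p q e e', (F * A * F) (p, e) (q, e')
      = if e = e' then aM e.val.2 p q else 0 := by
    intro p q e e'
    rw [hmulF, hFmul, hA]
    rcases eq_or_ne e e' with rfl | h
    · rw [if_pos rfl, if_pos rfl]; rfl
    · rw [if_neg (fun hc => h (odRev_inj hc)), if_neg h]
  have hD : ∀ p q e e', (A - F * A * F) (p, e) (q, e')
      = if e = e' then (aM e.val.1 - aM e.val.2) p q else 0 := by
    intro p q e e'
    rw [Matrix.sub_apply, hA, hFAF]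
    rcases eq_or_ne e e' with rfl | h
    · rw [if_pos rfl, if_pos rfl, if_pos rfl, Matrix.sub_apply]
    · rw [if_neg h, if_neg h, if_neg h, sub_zero]
  have hfirst : ‖toEuclideanCLM (𝕜 := ℂ) (A - F * A * F)‖ = osc := by
    rw [block_norm (fun e => aM e.val.1 - aM e.val.2) _ hD, hosc]
  refine ⟨hfirst, ?_⟩
  -- `F * A - A * F = F * (A - F * A * F)`
  have hfact : F * (A - F * A * F) = F * A - A * F := by
    rw [Matrix.mul_sub]
    congr 1
    rw [← Matrix.mul_assoc, ← Matrix.mul_assoc, hFF, Matrix.one_mul]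
  -- `F` acts isometrically
  have hFiso : ∀ y : EuclideanSpace ℂ (Fin m × OffDiag3),
      ‖toEuclideanCLM (𝕜 := ℂ) F y‖ = ‖y‖ := by
    intro y
    have happ : ∀ z : Fin m × OffDiag3,
        toEuclideanCLM (𝕜 := ℂ) F y z = y (z.1, odRev z.2) := by
      rintro ⟨p, e⟩
      rw [clm_apply']
      exact hFsum (fun w => y w) p e
    refine eq_of_sq_eq_sq' (norm_nonneg _) (norm_nonneg _) ?_
    rw [PiLp.norm_sq_eq_of_L2, PiLp.norm_sq_eq_of_L2,
      Finset.sum_congr rfl fun z _ => by rw [happ]]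
    exact Fintype.sum_bijective (fun z : Fin m × OffDiag3 => (z.1, odRev z.2))
      (Function.Involutive.bijective fun z => by simp [Prod.ext_iff, odRev_odRev]) _ _
      (fun z => rfl)
  have hmulnorm : ‖toEuclideanCLM (𝕜 := ℂ) (F * (A - F * A * F))‖
      = ‖toEuclideanCLM (𝕜 := ℂ) (A - F * A * F)‖ := by
    set X := A - F * A * F with hX
    have h1 : ∀ v, ‖toEuclideanCLM (𝕜 := ℂ) (F * X) v‖ = ‖toEuclideanCLM (𝕜 := ℂ) X v‖ := by
      intro v
      rw [_root_.map_mul, ContinuousLinearMap.mul_apply, hFiso]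
    refine le_antisymm ?_ ?_
    · refine ContinuousLinearMap.opNorm_le_bound _ (norm_nonneg _) fun v => ?_
      rw [h1]; exact (toEuclideanCLM (𝕜 := ℂ) X).le_opNorm v
    · refine ContinuousLinearMap.opNorm_le_bound _ (norm_nonneg _) fun v => ?_
      rw [← h1]; exact (toEuclideanCLM (𝕜 := ℂ) (F * X)).le_opNorm v
  rw [← hfact, hmulnorm, hfirst]
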